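/- arXiv:2605.16604 — 4 statements merged into one kernel-verified Lean document; each statement's English description precedes it below -/
import Mathlib

section
/- Let Y be a {0,1}-valued random variable with P(Y = 1) = q for some q ∈ [0,1], let ℓ be the cost-sensitive routing loss with constants c_SLM < c_LLM and κ > 0 satisfying 0 ≤ c_LLM − c_SLM ≤ κ, and set τ = (c_LLM − c_SLM)/κ. For any q̂ ∈ [0,1], let d̂ = 1[q̂ ≥ τ] and d* = 1[q ≥ τ]. Then E[ℓ(d̂, Y)] − E[ℓ(d*, Y)] ≤ κ·|q̂ − q|. -/
open MeasureTheory

/-- The cost-sensitive routing loss of a decision `d ∈ {0,1}` on a label `y ∈ {0,1}`: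
`ℓ(d, y) = c_SLM (1 − d) + c_LLM d + κ y (1 − d)`. -/
def routeLoss (cSLM cLLM κ : ℝ) (d y : ℝ) : ℝ :=
  cSLM * (1 - d) + cLLM * d + κ * y * (1 - d)

lemma integral_Y {Ω : Type*} [MeasurableSpace Ω] (μ : Measure Ω) [IsProbabilityMeasure μ]
    (Y : Ω → ℝ) (hY : Measurable Y) (hY01 : ∀ ω, Y ω = 0 ∨ Y ω = 1) :
    ∫ ω, Y ω ∂μ = (μ {ω | Y ω = 1}).toReal := by
  have hs : MeasurableSet {ω | Y ω = 1} := hY (measurableSet_singleton 1)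
  have hYeq : Y = Set.indicator {ω | Y ω = 1} (fun _ => (1 : ℝ)) := by
    funext ω
    rcases hY01 ω with h | h
    · rw [Set.indicator_of_notMem]
      · exact h
      · simp [Set.mem_setOf_eq, h]
    · rw [Set.indicator_of_mem]
      · exact h
      · exact h
  rw [hYeq, integral_indicator_const _ hs]
  simp
  rfl

lemma integral_routeLoss {Ω : Type*} [MeasurableSpace Ω] (μ : Measure Ω) [IsProbabilityMeasure μ]
    (Y : Ω → ℝ) (hY : Measurable Y) (hY01 : ∀ ω, Y ω = 0 ∨ Y ω = 1)
    (q : ℝ) (hq : (μ {ω | Y ω = 1}).toReal = q) (cSLM cLLM κ d : ℝ) :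
    ∫ ω, routeLoss cSLM cLLM κ d (Y ω) ∂μ
      = cSLM * (1 - d) + cLLM * d + κ * q * (1 - d) := by
  have hint : Integrable Y μ := by
    have hs : MeasurableSet {ω | Y ω = 1} := hY (measurableSet_singleton 1)
    have hYeq : Y = Set.indicator {ω | Y ω = 1} (fun _ => (1 : ℝ)) := by
      funext ω
      rcases hY01 ω with h | h
      · rw [Set.indicator_of_notMem]
        · exact h
        · simp [Set.mem_setOf_eq, h]
      · rw [Set.indicator_of_mem]
        · exact h
        · exact h
    rw [hYeq]
    exact (integrable_const (1:ℝ)).indicator hs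
  have h1 : (fun ω => routeLoss cSLM cLLM κ d (Y ω))
      = fun ω => (cSLM * (1 - d) + cLLM * d) + (κ * (1 - d)) * Y ω := by
    funext ω; unfold routeLoss; ring
  rw [h1, integral_add (integrable_const _) (hint.const_mul _), integral_const,
    integral_const_mul, integral_Y μ Y hY hY01, hq]
  simp; ring

/-- For a `{0,1}`-valued random variable `Y` with `P(Y = 1) = q`, the
cost-sensitive routing loss with `c_SLM < c_LLM`, `κ > 0`, `0 ≤ c_LLM − c_SLM ≤ κ`, and
`τ = (c_LLM − c_SLM)/κ`: for any `q̂ ∈ [0,1]`, with `d̂ = 1[q̂ ≥ τ]` and `d* = 1[q ≥ τ]`,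
`E[ℓ(d̂, Y)] − E[ℓ(d*, Y)] ≤ κ |q̂ − q|`. -/
theorem routeLoss_plugin_regret_scalar
    {Ω : Type*} [MeasurableSpace Ω] (μ : Measure Ω) [IsProbabilityMeasure μ]
    (Y : Ω → ℝ) (hY : Measurable Y) (hY01 : ∀ ω, Y ω = 0 ∨ Y ω = 1)
    (q : ℝ) (hq0 : 0 ≤ q) (hq1 : q ≤ 1)
    (hq : (μ {ω | Y ω = 1}).toReal = q)
    (cSLM cLLM κ : ℝ) (hc : cSLM < cLLM) (hκ : 0 < κ)
    (hgap0 : 0 ≤ cLLM - cSLM) (hgapκ : cLLM - cSLM ≤ κ)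
    (qhat : ℝ) (hqhat0 : 0 ≤ qhat) (hqhat1 : qhat ≤ 1) :
    (∫ ω, routeLoss cSLM cLLM κ (if (cLLM - cSLM) / κ ≤ qhat then 1 else 0) (Y ω) ∂μ) -
      (∫ ω, routeLoss cSLM cLLM κ (if (cLLM - cSLM) / κ ≤ q then 1 else 0) (Y ω) ∂μ) ≤
      κ * |qhat - q| := by
  rw [integral_routeLoss μ Y hY hY01 q hq, integral_routeLoss μ Y hY hY01 q hq]
  set τ := (cLLM - cSLM) / κ with hτ
  have hτκ : κ * τ = cLLM - cSLM := by rw [hτ]; field_simp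
  by_cases h1 : τ ≤ qhat <;> by_cases h2 : τ ≤ q <;> simp [h1, h2]
  · nlinarith [abs_nonneg (qhat - q)]
  · -- d̂ = 1, d* = 0 : q < τ ≤ qhat
    have : τ - q ≤ qhat - q := by linarith
    have habs : qhat - q ≤ |qhat - q| := le_abs_self _
    nlinarith
  · -- d̂ = 0, d* = 1 : qhat < τ ≤ q
    have habs : q - qhat ≤ |qhat - q| := by rw [abs_sub_comm]; exact le_abs_self _
    nlinarith
  · nlinarith [abs_nonneg (qhat - q)]
end

section
/- Let (Ω, ℱ, P) be a probability space, F a random variable taking values in a measurable space 𝔽, and Y a {0,1}-valued random variable. Let q* : 𝔽 → [0,1] be measurable with q*(F) = E[Y | F] almost surely, and let r : 𝔽 → [0,1] be measurable. Let ℓ be the cost-sensitive routing loss with constants c_SLM < c_LLM and κ > 0 satisfying 0 ≤ c_LLM − c_SLM ≤ κ, and set τ = (c_LLM − c_SLM)/κ. Define the plug-in router d̂ = 1[r(F) ≥ τ] and the Bayes router d* = 1[q*(F) ≥ τ]. Then E[ℓ(d̂, Y)] − E[ℓ(d*, Y)] ≤ κ·E[|r(F) − q*(F)|]; that is, the excess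 expected routing cost of the plug-in router is bounded by κ times the mean absolute calibration error of r. -/
open MeasureTheory

/-- Let `F` be a random variable with values in a measurable space `𝔽`,
`Y` a `{0,1}`-valued random variable, `q* : 𝔽 → [0,1]` measurable with `q*(F) = E[Y | F]`
a.s., and `r : 𝔽 → [0,1]` measurable. For the cost-sensitive routing loss with
`c_SLM < c_LLM`, `κ > 0`, `0 ≤ c_LLM − c_SLM ≤ κ`, and threshold `τ = (c_LLM − c_SLM)/κ`,
the plug-in router `d̂ = 1[r(F) ≥ τ]` and the Bayes router `d* = 1[q*(F) ≥ τ]` satisfy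
`E[ℓ(d̂, Y)] − E[ℓ(d*, Y)] ≤ κ E[|r(F) − q*(F)|]`. -/
theorem plugin_router_regret_le_calibration_error
    {Ω 𝔽 : Type*} [MeasurableSpace Ω] [MeasurableSpace 𝔽]
    (μ : Measure Ω) [IsProbabilityMeasure μ]
    (F : Ω → 𝔽) (hF : Measurable F)
    (Y : Ω → ℝ) (hY : Measurable Y) (hY01 : ∀ ω, Y ω = 0 ∨ Y ω = 1)
    (qs : 𝔽 → ℝ) (hqs : Measurable qs) (hqs0 : ∀ f, 0 ≤ qs f) (hqs1 : ∀ f, qs f ≤ 1)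
    (hqsF : (fun ω => qs (F ω)) =ᵐ[μ] μ[Y | MeasurableSpace.comap F inferInstance])
    (r : 𝔽 → ℝ) (hr : Measurable r) (hr0 : ∀ f, 0 ≤ r f) (hr1 : ∀ f, r f ≤ 1)
    (cSLM cLLM κ : ℝ) (hc : cSLM < cLLM) (hκ : 0 < κ)
    (hgap0 : 0 ≤ cLLM - cSLM) (hgapκ : cLLM - cSLM ≤ κ) :
    (∫ ω, routeLoss cSLM cLLM κ (if (cLLM - cSLM) / κ ≤ r (F ω) then 1 else 0) (Y ω) ∂μ) -
      (∫ ω, routeLoss cSLM cLLM κ (if (cLLM - cSLM) / κ ≤ qs (F ω) then 1 else 0) (Y ω) ∂μ) ≤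
      κ * ∫ ω, |r (F ω) - qs (F ω)| ∂μ := by
  set τ : ℝ := (cLLM - cSLM) / κ with hτ
  have hτ0 : 0 ≤ τ := div_nonneg hgap0 hκ.le
  have hτ1 : τ ≤ 1 := by
    rw [hτ, div_le_one hκ]; exact hgapκ
  have hκτ : cLLM - cSLM = κ * τ := by
    rw [hτ, mul_div_assoc', eq_div_iff hκ.ne']; ring
  set dH : Ω → ℝ := fun ω => if τ ≤ r (F ω) then 1 else 0 with hdH
  set dS : Ω → ℝ := fun ω => if τ ≤ qs (F ω) then 1 else 0 with hdS
  have hdHm : Measurable dH :=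
    Measurable.ite (measurableSet_le measurable_const (hr.comp hF))
      measurable_const measurable_const
  have hdSm : Measurable dS :=
    Measurable.ite (measurableSet_le measurable_const (hqs.comp hF))
      measurable_const measurable_const
  -- generic integrability from boundedness
  have intble : ∀ (f : Ω → ℝ) (C : ℝ), Measurable f → (∀ ω, |f ω| ≤ C) →
      Integrable f μ := by
    intro f C hf hC
    exact Integrable.mono' (integrable_const C) hf.aestronglyMeasurable
      (Filter.Eventually.of_forall fun ω => by simpa [Real.norm_eq_abs] using hC ω)
  have hY0 : ∀ ω, 0 ≤ Y ω := fun ω => by rcases hY01 ω with h | h <;> simp [h]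
  have hY1 : ∀ ω, Y ω ≤ 1 := fun ω => by rcases hY01 ω with h | h <;> simp [h]
  have hYint : Integrable Y μ := intble Y 1 hY (fun ω => abs_le.2 ⟨by linarith [hY0 ω], hY1 ω⟩)
  have hdbound : ∀ ω, |dH ω - dS ω| ≤ 1 := by
    intro ω
    simp only [hdH, hdS]
    by_cases h1 : τ ≤ r (F ω) <;> by_cases h2 : τ ≤ qs (F ω) <;> simp [h1, h2]
  have hLint : ∀ (d : Ω → ℝ), Measurable d → (∀ ω, |d ω| ≤ 1) →
      Integrable (fun ω => routeLoss cSLM cLLM κ (d ω) (Y ω)) μ := by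
    intro d hd hdb
    refine intble _ (|cSLM| * 2 + |cLLM| + |κ| * 2) ?_ ?_
    · unfold routeLoss
      fun_prop
    · intro ω
      unfold routeLoss
      have h1 : |1 - d ω| ≤ 2 := by
        have := abs_le.1 (hdb ω); rw [abs_le]; constructor <;> linarith
      have h2 : |κ * Y ω * (1 - d ω)| ≤ |κ| * 2 := by
        rw [abs_mul, abs_mul]
        have hYb : |Y ω| ≤ 1 := abs_le.2 ⟨by linarith [hY0 ω], hY1 ω⟩
        calc |κ| * |Y ω| * |1 - d ω| ≤ |κ| * 1 * 2 := by
              apply mul_le_mul _ h1 (abs_nonneg _) (by positivity)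
              exact mul_le_mul_of_nonneg_left hYb (abs_nonneg _)
          _ = |κ| * 2 := by ring
      calc |cSLM * (1 - d ω) + cLLM * d ω + κ * Y ω * (1 - d ω)|
          ≤ |cSLM * (1 - d ω)| + |cLLM * d ω| + |κ * Y ω * (1 - d ω)| := by
            exact (abs_add_le _ _).trans (by gcongr; exact abs_add_le _ _)
        _ ≤ |cSLM| * 2 + |cLLM| + |κ| * 2 := by
            have a1 : |cSLM * (1 - d ω)| ≤ |cSLM| * 2 := by
              rw [abs_mul]; exact mul_le_mul_of_nonneg_left h1 (abs_nonneg _)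
            have a2 : |cLLM * d ω| ≤ |cLLM| * 1 := by
              rw [abs_mul]; exact mul_le_mul_of_nonneg_left (hdb ω) (abs_nonneg _)
            linarith
  have hdHb : ∀ ω, |dH ω| ≤ 1 := by
    intro ω; simp only [hdH]; by_cases h : τ ≤ r (F ω) <;> simp [h]
  have hdSb : ∀ ω, |dS ω| ≤ 1 := by
    intro ω; simp only [hdS]; by_cases h : τ ≤ qs (F ω) <;> simp [h]
  -- step 1: rewrite the difference of integrals
  have step1 : (∫ ω, routeLoss cSLM cLLM κ (dH ω) (Y ω) ∂μ)
      - (∫ ω, routeLoss cSLM cLLM κ (dS ω) (Y ω) ∂μ)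
      = ∫ ω, (dH ω - dS ω) * (cLLM - cSLM - κ * Y ω) ∂μ := by
    rw [← integral_sub (hLint dH hdHm hdHb) (hLint dS hdSm hdSb)]
    congr 1; funext ω; unfold routeLoss; ring
  -- replacing Y by qs ∘ F against comap-measurable indicators
  have key : ∀ (g : 𝔽 → ℝ), Measurable g → (∀ f, |g f| ≤ 1) →
      (∫ ω, (if τ ≤ g (F ω) then (1:ℝ) else 0) * Y ω ∂μ)
        = ∫ ω, (if τ ≤ g (F ω) then (1:ℝ) else 0) * qs (F ω) ∂μ := by
    intro g hg hgb
    set t : Set 𝔽 := {f | τ ≤ g f} with ht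
    have htm : MeasurableSet t := measurableSet_le measurable_const hg
    set s : Set Ω := F ⁻¹' t with hs
    have hsm : MeasurableSet s := hF htm
    have hsm' : MeasurableSet[MeasurableSpace.comap F inferInstance] s :=
      ⟨t, htm, rfl⟩
    have hm : MeasurableSpace.comap F inferInstance ≤ ‹MeasurableSpace Ω› :=
      hF.comap_le
    have h1 : (∫ ω, (if τ ≤ g (F ω) then (1:ℝ) else 0) * Y ω ∂μ)
        = ∫ ω in s, Y ω ∂μ := by
      rw [← integral_indicator hsm]
      congr 1; funext ω
      by_cases h : ω ∈ s
      · simp [Set.indicator_of_mem h, Set.mem_preimage.1 h, hs, ht] at *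
        simp [h]
      · have : ¬ τ ≤ g (F ω) := h
        simp [Set.indicator_of_notMem h, this]
    have h2 : (∫ ω, (if τ ≤ g (F ω) then (1:ℝ) else 0) * qs (F ω) ∂μ)
        = ∫ ω in s, qs (F ω) ∂μ := by
      rw [← integral_indicator hsm]
      congr 1; funext ω
      by_cases h : ω ∈ s
      · have : τ ≤ g (F ω) := h
        simp [Set.indicator_of_mem h, this]
      · have : ¬ τ ≤ g (F ω) := h
        simp [Set.indicator_of_notMem h, this]
    rw [h1, h2]
    have h3 : (∫ ω in s, qs (F ω) ∂μ)
        = ∫ ω in s, (μ[Y | MeasurableSpace.comap F inferInstance]) ω ∂μ :=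
      integral_congr_ae (ae_restrict_of_ae hqsF)
    rw [h3, setIntegral_condExp hm hYint hsm']
  -- step 2: replace Y by qs ∘ F
  have step2 : (∫ ω, (dH ω - dS ω) * (cLLM - cSLM - κ * Y ω) ∂μ)
      = κ * ∫ ω, (dH ω - dS ω) * (τ - qs (F ω)) ∂μ := by
    have intbl : ∀ (f : Ω → ℝ), Measurable f → (∀ ω, |f ω| ≤ 1) →
        Integrable (fun ω => dH ω * f ω) μ ∧ Integrable (fun ω => dS ω * f ω) μ := by
      intro f hf hfb
      constructor
      · refine intble _ 1 (hdHm.mul hf) ?_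
        intro ω; rw [abs_mul]
        calc |dH ω| * |f ω| ≤ 1 * 1 := mul_le_mul (hdHb ω) (hfb ω) (abs_nonneg _) zero_le_one
          _ = 1 := one_mul 1
      · refine intble _ 1 (hdSm.mul hf) ?_
        intro ω; rw [abs_mul]
        calc |dS ω| * |f ω| ≤ 1 * 1 := mul_le_mul (hdSb ω) (hfb ω) (abs_nonneg _) zero_le_one
          _ = 1 := one_mul 1
    have hYb : ∀ ω, |Y ω| ≤ 1 := fun ω => abs_le.2 ⟨by linarith [hY0 ω], hY1 ω⟩
    have hqsb : ∀ ω, |qs (F ω)| ≤ 1 := fun ω =>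
      abs_le.2 ⟨by linarith [hqs0 (F ω)], hqs1 (F ω)⟩
    obtain ⟨iHY, iSY⟩ := intbl Y hY hYb
    obtain ⟨iHq, iSq⟩ := intbl (fun ω => qs (F ω)) (hqs.comp hF) hqsb
    have hτc : ∀ ω, (dH ω - dS ω) * (cLLM - cSLM - κ * Y ω)
        = κ * ((dH ω - dS ω) * τ - (dH ω * Y ω - dS ω * Y ω)) := by
      intro ω; rw [hκτ]; ring
    have hτc' : ∀ ω, (dH ω - dS ω) * (τ - qs (F ω))
        = (dH ω - dS ω) * τ - (dH ω * qs (F ω) - dS ω * qs (F ω)) := by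
      intro ω; ring
    simp only [hτc, hτc']
    rw [integral_const_mul]
    congr 1
    have idτH : Integrable (fun ω => (dH ω - dS ω) * τ) μ := by
      refine intble _ |τ| ((hdHm.sub hdSm).mul_const τ) ?_
      intro ω; rw [abs_mul]
      calc |dH ω - dS ω| * |τ| ≤ 1 * |τ| :=
            mul_le_mul_of_nonneg_right (hdbound ω) (abs_nonneg _)
        _ = |τ| := one_mul _
    have iHYS : Integrable (fun ω => dH ω * Y ω - dS ω * Y ω) μ := iHY.sub iSY
    have iHqS : Integrable (fun ω => dH ω * qs (F ω) - dS ω * qs (F ω)) μ := iHq.sub iSq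
    rw [integral_sub idτH iHYS, integral_sub idτH iHqS,
      integral_sub iHY iSY, integral_sub iHq iSq]
    have e1 := key r hr (fun f => abs_le.2 ⟨by linarith [hr0 f], hr1 f⟩)
    have e2 := key qs hqs (fun f => abs_le.2 ⟨by linarith [hqs0 f], hqs1 f⟩)
    simp only [hdH, hdS]
    rw [e1, e2]
  -- step 3: pointwise bound and conclude
  have step3 : (∫ ω, (dH ω - dS ω) * (τ - qs (F ω)) ∂μ)
      ≤ ∫ ω, |r (F ω) - qs (F ω)| ∂μ := by
    have ptwise : ∀ ω, (dH ω - dS ω) * (τ - qs (F ω)) ≤ |r (F ω) - qs (F ω)| := by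
      intro ω
      simp only [hdH, hdS]
      have habs := le_abs_self (r (F ω) - qs (F ω))
      have habs2 := neg_abs_le (r (F ω) - qs (F ω))
      have habs0 := abs_nonneg (r (F ω) - qs (F ω))
      split_ifs with h1 h2 h2
      · nlinarith
      · push_neg at h2; nlinarith
      · push_neg at h1; nlinarith
      · nlinarith
    have iL : Integrable (fun ω => (dH ω - dS ω) * (τ - qs (F ω))) μ := by
      refine intble _ 2 ((hdHm.sub hdSm).mul (measurable_const.sub (hqs.comp hF))) ?_
      intro ω; rw [abs_mul]
      have h1 : |τ - qs (F ω)| ≤ 2 := by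
        rw [abs_le]; constructor <;> [linarith [hτ0, hqs1 (F ω)]; linarith [hτ1, hqs0 (F ω)]]
      calc |dH ω - dS ω| * |τ - qs (F ω)| ≤ 1 * 2 := by
            exact mul_le_mul (hdbound ω) h1 (abs_nonneg _) zero_le_one
        _ = 2 := one_mul 2
    have iR : Integrable (fun ω => |r (F ω) - qs (F ω)|) μ := by
      refine intble _ 2 ((hr.comp hF).sub (hqs.comp hF)).abs ?_
      intro ω
      rw [abs_abs, abs_le]
      constructor <;> [linarith [hr0 (F ω), hqs1 (F ω)]; linarith [hr1 (F ω), hqs0 (F ω)]]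
    exact integral_mono iL iR ptwise
  calc (∫ ω, routeLoss cSLM cLLM κ (dH ω) (Y ω) ∂μ)
      - (∫ ω, routeLoss cSLM cLLM κ (dS ω) (Y ω) ∂μ)
      = κ * ∫ ω, (dH ω - dS ω) * (τ - qs (F ω)) ∂μ := by rw [step1, step2]
    _ ≤ κ * ∫ ω, |r (F ω) - qs (F ω)| ∂μ :=
        mul_le_mul_of_nonneg_left step3 hκ.le
end

section
/- Let H ≥ 1 be an integer, and for each t ∈ {1, …, H} let P_t and Q_t be probability measures on a fixed measurable action space, and let ℓ_t be a real-valued functional on probability measures on that space satisfying |ℓ_t(P) − ℓ_t(Q)| ≤ L·TV(P, Q) for all probability measures P, Q and a fixed constant L > 0. Define R_P = Σ_{t=1}^H ℓ_t(P_t), R_Q = Σ_{t=1}^H ℓ_t(Q_t), and the average consistency loss C = (1/H)·Σ_{t=1}^H JSD(P_t‖Q_t). Then |R_P − R_Q| ≤ H·L·√(2·C). -/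
open MeasureTheory
open scoped ENNReal BigOperators

/-- Total variation distance between two measures:
`TV(P, Q) = sup over measurable sets A of |P(A) − Q(A)|`. -/
noncomputable def tvDist {Ω : Type*} [MeasurableSpace Ω] (P Q : Measure Ω) : ℝ :=
  ⨆ A : {A : Set Ω // MeasurableSet A}, |(P (A : Set Ω)).toReal - (Q (A : Set Ω)).toReal|

/-- Kullback–Leibler divergence `KL(P‖Q) = ∫ log (dP/dQ) dP` (via the Radon–Nikodym
derivative). -/
noncomputable def klDiv {Ω : Type*} [MeasurableSpace Ω] (P Q : Measure Ω) : ℝ :=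
  ∫ x, Real.log (P.rnDeriv Q x).toReal ∂P

/-- Jensen–Shannon divergence: with the mixture `M = (P + Q)/2`,
`JSD(P‖Q) = ½ KL(P‖M) + ½ KL(Q‖M)`. -/
noncomputable def jsDiv {Ω : Type*} [MeasurableSpace Ω] (P Q : Measure Ω) : ℝ :=
  (1 / 2) * klDiv P ((2 : ℝ≥0∞)⁻¹ • (P + Q)) + (1 / 2) * klDiv Q ((2 : ℝ≥0∞)⁻¹ • (P + Q))

open Real in
-- calculus lemma
lemma aux_log (t : ℝ) (ht : t ∈ Set.Ico (0:ℝ) 1) :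
    2 * t ≤ Real.log (1 + t) - Real.log (1 - t) := by
  set g : ℝ → ℝ := fun s => Real.log (1 + s) - Real.log (1 - s) - 2 * s with hg
  have hderiv : ∀ s ∈ Set.Ioo (0:ℝ) 1, HasDerivAt g (1/(1+s) - (-1)/(1-s) - 2) s := by
    intro s hs
    have h1 : HasDerivAt (fun u : ℝ => 1 + u) 1 s := by
      simpa using (hasDerivAt_id s).const_add 1
    have h2 : HasDerivAt (fun u : ℝ => 1 - u) (-1) s := by
      simpa using (hasDerivAt_id s).const_sub 1
    have h1' := h1.log (by nlinarith [hs.1, hs.2])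
    have h2' := h2.log (by nlinarith [hs.1, hs.2])
    refine ((h1'.sub h2').sub ((hasDerivAt_id s).const_mul 2)).congr_deriv ?_
    ring
  have hcont : ContinuousOn g (Set.Ico 0 1) := by
    apply ContinuousOn.sub
    apply ContinuousOn.sub
    · exact (Real.continuousOn_log.comp (by fun_prop) (by
        intro x hx; simp only [Set.mem_Ico] at hx
        simp only [Set.mem_compl_iff, Set.mem_singleton_iff]; nlinarith [hx.1, hx.2]))
    · exact (Real.continuousOn_log.comp (by fun_prop) (by
        intro x hx; simp only [Set.mem_Ico] at hx
        simp only [Set.mem_compl_iff, Set.mem_singleton_iff]; nlinarith [hx.1, hx.2]))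
    · fun_prop
  have hmono : MonotoneOn g (Set.Ico 0 1) := by
    apply monotoneOn_of_deriv_nonneg (convex_Ico 0 1) hcont
    · intro s hs
      rw [interior_Ico] at hs
      exact (hderiv s hs).differentiableAt.differentiableWithinAt
    · intro s hs
      rw [interior_Ico] at hs
      rw [(hderiv s hs).deriv]
      have h1 : 0 < 1 + s := by nlinarith [hs.1, hs.2]
      have h2 : 0 < 1 - s := by nlinarith [hs.1, hs.2]
      have key : 1/(1+s) - (-1)/(1-s) - 2 = 2*s^2/((1+s)*(1-s)) := by
        field_simp; ring
      rw [key]; positivity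
  have h0 : g 0 = 0 := by simp [hg]
  have := hmono (Set.left_mem_Ico.mpr one_pos) ht ht.1
  rw [h0] at this
  simp only [hg] at this
  linarith


lemma aux_ent (t : ℝ) (ht : t ∈ Set.Icc (0:ℝ) 1) :
    t ^ 2 ≤ (1 + t) * Real.log (1 + t) + (1 - t) * Real.log (1 - t) := by
  rcases eq_or_lt_of_le ht.2 with h1 | h1
  · -- t = 1
    subst h1
    have := Real.log_two_gt_d9
    norm_num [Real.log_zero]
    nlinarith [this]
  set F : ℝ → ℝ := fun s => (1 + s) * Real.log (1 + s) + (1 - s) * Real.log (1 - s) - s ^ 2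
    with hF
  have hderiv : ∀ s ∈ Set.Ioo (0:ℝ) 1,
      HasDerivAt F (Real.log (1 + s) - Real.log (1 - s) - 2 * s) s := by
    intro s hs
    have hp1 : (0:ℝ) < 1 + s := by nlinarith [hs.1, hs.2]
    have hp2 : (0:ℝ) < 1 - s := by nlinarith [hs.1, hs.2]
    have h1 : HasDerivAt (fun u : ℝ => 1 + u) 1 s := by
      simpa using (hasDerivAt_id s).const_add 1
    have h2 : HasDerivAt (fun u : ℝ => 1 - u) (-1) s := by
      simpa using (hasDerivAt_id s).const_sub 1
    have h1' := h1.log hp1.ne'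
    have h2' := h2.log hp2.ne'
    have hA := h1.mul h1'
    have hB := h2.mul h2'
    have hC := (hA.add hB).sub (hasDerivAt_pow 2 s)
    refine hC.congr_deriv ?_
    have e1 := mul_one_div_cancel hp1.ne'
    have e2 := mul_one_div_cancel hp2.ne'
    rw [show (2:ℕ) - 1 = 1 from rfl]
    push_cast
    linear_combination e1 - e2
  have hcont : ContinuousOn F (Set.Ico 0 1) := by
    apply ContinuousOn.sub
    apply ContinuousOn.add
    · apply ContinuousOn.mul (by fun_prop)
      refine Real.continuousOn_log.comp (by fun_prop) ?_
      intro x hx; simp only [Set.mem_Ico] at hx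
      simp only [Set.mem_compl_iff, Set.mem_singleton_iff]; nlinarith [hx.1, hx.2]
    · apply ContinuousOn.mul (by fun_prop)
      refine Real.continuousOn_log.comp (by fun_prop) ?_
      intro x hx; simp only [Set.mem_Ico] at hx
      simp only [Set.mem_compl_iff, Set.mem_singleton_iff]; nlinarith [hx.1, hx.2]
    · fun_prop
  have hmono : MonotoneOn F (Set.Ico 0 1) := by
    apply monotoneOn_of_deriv_nonneg (convex_Ico 0 1) hcont
    · intro s hs
      rw [interior_Ico] at hs
      exact (hderiv s hs).differentiableAt.differentiableWithinAt
    · intro s hs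
      rw [interior_Ico] at hs
      rw [(hderiv s hs).deriv]
      have := aux_log s ⟨hs.1.le, hs.2⟩
      linarith
  have h0 : F 0 = 0 := by simp [hF]
  have := hmono (Set.left_mem_Ico.mpr one_pos) ⟨ht.1, h1⟩ ht.1
  rw [h0] at this
  simp only [hF] at this
  linarith

lemma entropy_ge_sq (x : ℝ) (hx : x ∈ Set.Icc (0:ℝ) 2) :
    (x - 1) ^ 2 ≤ x * Real.log x + (2 - x) * Real.log (2 - x) := by
  rcases le_total 1 x with h | h
  · have := aux_ent (x - 1) ⟨by linarith, by linarith [hx.2]⟩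
    have e1 : 1 + (x - 1) = x := by ring
    have e2 : 1 - (x - 1) = 2 - x := by ring
    rw [e1, e2] at this
    linarith
  · have := aux_ent (1 - x) ⟨by linarith, by linarith [hx.1]⟩
    have e1 : 1 + (1 - x) = 2 - x := by ring
    have e2 : 1 - (1 - x) = x := by ring
    rw [e1, e2] at this
    nlinarith [this]


lemma xlogx_bound (x : ℝ) (h0 : 0 ≤ x) (h2 : x ≤ 2) : |x * Real.log x| ≤ 2 := by
  rcases le_total x 1 with h1 | h1
  · rcases eq_or_lt_of_le h0 with h | h
    · rw [← h]; norm_num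
    · have hlog : Real.log x ≤ 0 := Real.log_nonpos h0 h1
      have hb : Real.log x⁻¹ ≤ x⁻¹ - 1 := Real.log_le_sub_one_of_pos (by positivity)
      rw [Real.log_inv] at hb
      have hx' : x * (-Real.log x) ≤ x * (x⁻¹ - 1) := by
        apply mul_le_mul_of_nonneg_left _ h0
        linarith
      have : x * (x⁻¹ - 1) = 1 - x := by field_simp
      rw [abs_of_nonpos (mul_nonpos_of_nonneg_of_nonpos h0 hlog)]
      nlinarith
  · have hlog0 : 0 ≤ Real.log x := Real.log_nonneg h1
    have hb : Real.log x ≤ x - 1 := Real.log_le_sub_one_of_pos (by linarith)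
    rw [abs_of_nonneg (mul_nonneg (by linarith) hlog0)]
    nlinarith

lemma tv_le_sqrt_js {Ω : Type*} [MeasurableSpace Ω] (P Q : Measure Ω)
    [IsProbabilityMeasure P] [IsProbabilityMeasure Q] :
    0 ≤ jsDiv P Q ∧ tvDist P Q ≤ Real.sqrt (2 * jsDiv P Q) := by
  set M : Measure Ω := (2 : ℝ≥0∞)⁻¹ • (P + Q) with hM
  have hsum : (2 : ℝ≥0∞) • M = P + Q := by
    rw [hM, smul_smul, ENNReal.mul_inv_cancel (by norm_num) (by norm_num), one_smul]
  haveI hMprob : IsProbabilityMeasure M := by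
    constructor
    rw [hM]
    rw [Measure.smul_apply, Measure.add_apply, measure_univ, measure_univ, smul_eq_mul]
    rw [one_add_one_eq_two, ENNReal.inv_mul_cancel (by norm_num) (by norm_num)]
  have hPM : P ≪ M := by
    intro A hA
    have h2 : (P + Q) A = 0 := by
      rw [← hsum, Measure.smul_apply, hA, smul_eq_mul, mul_zero]
    rw [Measure.add_apply] at h2
    exact (add_eq_zero.mp h2).1
  have hQM : Q ≪ M := by
    intro A hA
    have h2 : (P + Q) A = 0 := by
      rw [← hsum, Measure.smul_apply, hA, smul_eq_mul, mul_zero]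
    rw [Measure.add_apply] at h2
    exact (add_eq_zero.mp h2).2
  set f : Ω → ℝ := fun x => (P.rnDeriv M x).toReal with hf
  set g : Ω → ℝ := fun x => (Q.rnDeriv M x).toReal with hg
  -- a.e. properties
  have hfg2 : ∀ᵐ x ∂M, P.rnDeriv M x + Q.rnDeriv M x = 2 := by
    have h1 := Measure.rnDeriv_add P Q M
    have h2 : ((2 : ℝ≥0∞) • M).rnDeriv M =ᵐ[M] (2 : ℝ≥0∞) • M.rnDeriv M :=
      Measure.rnDeriv_smul_left_of_ne_top M M (by norm_num)
    have h3 := Measure.rnDeriv_self M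
    rw [hsum] at h2
    filter_upwards [h1, h2, h3] with x hx1 hx2 hx3
    have : P.rnDeriv M x + Q.rnDeriv M x = (P + Q).rnDeriv M x := by
      rw [hx1]; simp
    rw [this, hx2, Pi.smul_apply, hx3, smul_eq_mul, mul_one]
  have hprop : ∀ᵐ x ∂M, f x + g x = 2 ∧ 0 ≤ f x ∧ 0 ≤ g x := by
    filter_upwards [hfg2, Measure.rnDeriv_lt_top P M, Measure.rnDeriv_lt_top Q M]
      with x h2 hft hgt
    refine ⟨?_, ENNReal.toReal_nonneg, ENNReal.toReal_nonneg⟩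
    rw [hf, hg, ← ENNReal.toReal_add hft.ne hgt.ne, h2]
    norm_num
  have hf_int : Integrable f M := Measure.integrable_toReal_rnDeriv
  have hg_int : Integrable g M := Measure.integrable_toReal_rnDeriv
  have hf_meas : Measurable f := (Measure.measurable_rnDeriv P M).ennreal_toReal
  have hg_meas : Measurable g := (Measure.measurable_rnDeriv Q M).ennreal_toReal
  -- total integral of f - g is zero
  have h_int_zero : ∫ x, (f x - g x) ∂M = 0 := by
    rw [integral_sub hf_int hg_int, Measure.integral_toReal_rnDeriv hPM,
      Measure.integral_toReal_rnDeriv hQM]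
    simp
  -- TV bound
  have key : ∀ A : Set Ω, MeasurableSet A →
      |(P A).toReal - (Q A).toReal| ≤ ∫ x, |f x - 1| ∂M := by
    intro A hA
    have hPA := Measure.setIntegral_toReal_rnDeriv hPM A
    have hQA := Measure.setIntegral_toReal_rnDeriv hQM A
    have h_int : Integrable (fun x => f x - g x) M := hf_int.sub hg_int
    have e1 : (P A).toReal - (Q A).toReal = ∫ x in A, (f x - g x) ∂M := by
      rw [integral_sub hf_int.integrableOn hg_int.integrableOn, hPA, hQA]
      rfl
    have hsplit := integral_add_compl hA h_int
    rw [h_int_zero] at hsplit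
    have habs1 : |∫ x in A, (f x - g x) ∂M| ≤ ∫ x in A, |f x - g x| ∂M := by
      simpa [Real.norm_eq_abs] using
        norm_integral_le_integral_norm (μ := M.restrict A) (fun x => f x - g x)
    have habs2 : |∫ x in Aᶜ, (f x - g x) ∂M| ≤ ∫ x in Aᶜ, |f x - g x| ∂M := by
      simpa [Real.norm_eq_abs] using
        norm_integral_le_integral_norm (μ := M.restrict Aᶜ) (fun x => f x - g x)
    have hsum_abs : ∫ x in A, |f x - g x| ∂M + ∫ x in Aᶜ, |f x - g x| ∂M
        = ∫ x, |f x - g x| ∂M := integral_add_compl hA h_int.abs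
    have htot : ∫ x, |f x - g x| ∂M = 2 * ∫ x, |f x - 1| ∂M := by
      rw [← integral_const_mul]
      apply integral_congr_ae
      filter_upwards [hprop] with x hx
      have : g x = 2 - f x := by linarith [hx.1]
      rw [this]
      rw [show f x - (2 - f x) = 2 * (f x - 1) by ring, abs_mul]
      norm_num
    have heq : ∫ x in A, (f x - g x) ∂M = - ∫ x in Aᶜ, (f x - g x) ∂M := by
      linarith
    rw [e1]
    have : |∫ x in A, (f x - g x) ∂M| + |∫ x in Aᶜ, (f x - g x) ∂M|
        ≤ 2 * ∫ x, |f x - 1| ∂M := by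
      rw [← htot, ← hsum_abs]; linarith
    rw [heq, abs_neg] at this ⊢
    linarith [abs_nonneg (∫ x in Aᶜ, (f x - g x) ∂M)]
  haveI : Nonempty {A : Set Ω // MeasurableSet A} := ⟨⟨∅, MeasurableSet.empty⟩⟩
  have htv : tvDist P Q ≤ ∫ x, |f x - 1| ∂M := ciSup_le fun A => key A.1 A.2
  -- KL rewrites
  have hKLP : klDiv P M = ∫ x, f x * Real.log (f x) ∂M := by
    rw [klDiv, ← integral_rnDeriv_smul hPM]
    simp [hf, smul_eq_mul]
  have hKLQ : klDiv Q M = ∫ x, g x * Real.log (g x) ∂M := by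
    rw [klDiv, ← integral_rnDeriv_smul hQM]
    simp [hg, smul_eq_mul]
  -- integrability of x log x terms
  have hIP : Integrable (fun x => f x * Real.log (f x)) M := by
    refine Integrable.mono' (integrable_const 2)
      ((hf_meas.mul (Real.measurable_log.comp hf_meas)).aestronglyMeasurable) ?_
    filter_upwards [hprop] with x hx
    rw [Real.norm_eq_abs]
    exact xlogx_bound _ hx.2.1 (by linarith [hx.1, hx.2.2])
  have hIQ : Integrable (fun x => g x * Real.log (g x)) M := by
    refine Integrable.mono' (integrable_const 2)
      ((hg_meas.mul (Real.measurable_log.comp hg_meas)).aestronglyMeasurable) ?_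
    filter_upwards [hprop] with x hx
    rw [Real.norm_eq_abs]
    exact xlogx_bound _ hx.2.2 (by linarith [hx.1, hx.2.1])
  have hjs : 2 * jsDiv P Q = ∫ x, (f x * Real.log (f x) + g x * Real.log (g x)) ∂M := by
    have hjd : jsDiv P Q = (1/2) * klDiv P M + (1/2) * klDiv Q M := by rw [jsDiv, ← hM]
    rw [hjd, hKLP, hKLQ, integral_add hIP hIQ]
    ring
  -- pointwise entropy inequality
  have hsq_int : Integrable (fun x => (f x - 1) ^ 2) M := by
    refine Integrable.mono' (integrable_const 1)
      (((hf_meas.sub measurable_const).pow_const 2).aestronglyMeasurable) ?_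
    filter_upwards [hprop] with x hx
    rw [Real.norm_eq_abs, abs_of_nonneg (sq_nonneg _)]
    nlinarith [hx.1, hx.2.1, hx.2.2]
  have h1 : ∫ x, (f x - 1) ^ 2 ∂M ≤ 2 * jsDiv P Q := by
    rw [hjs]
    refine integral_mono_ae hsq_int (hIP.add hIQ) ?_
    filter_upwards [hprop] with x hx
    have h2f : 2 - f x = g x := by linarith [hx.1]
    have := entropy_ge_sq (f x) ⟨hx.2.1, by linarith [hx.1, hx.2.2]⟩
    rw [h2f] at this
    exact this
  -- Cauchy-Schwarz via variance trick
  set c : ℝ := ∫ x, |f x - 1| ∂M with hc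
  have habs_int : Integrable (fun x => |f x - 1|) M := (hf_int.sub (integrable_const 1)).abs
  have hc_nonneg : 0 ≤ c := integral_nonneg fun x => abs_nonneg _
  have hvar : ∫ x, (|f x - 1| - c) ^ 2 ∂M = ∫ x, (f x - 1) ^ 2 ∂M - c ^ 2 := by
    have expand : (fun x => (|f x - 1| - c) ^ 2)
        = fun x => ((f x - 1) ^ 2 - (2 * c) * |f x - 1| + c ^ 2) := by
      funext x
      rw [sub_sq, sq_abs]
      ring
    have hint2 : Integrable (fun x => (2 * c) * |f x - 1|) M := habs_int.const_mul _
    have hint1 : Integrable (fun x => (f x - 1) ^ 2 - (2 * c) * |f x - 1|) M :=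
      hsq_int.sub hint2
    rw [expand, integral_add hint1 (integrable_const _),
      integral_sub hsq_int hint2, integral_const_mul, ← hc,
      integral_const, probReal_univ]
    simp
    ring
  have hcs : c ^ 2 ≤ ∫ x, (f x - 1) ^ 2 ∂M := by
    have h0 : 0 ≤ ∫ x, (|f x - 1| - c) ^ 2 ∂M := integral_nonneg fun x => sq_nonneg _
    linarith [hvar ▸ h0]
  have hjs_nonneg : 0 ≤ jsDiv P Q := by nlinarith [sq_nonneg c]
  refine ⟨hjs_nonneg, ?_⟩
  calc tvDist P Q ≤ c := htv
    _ = Real.sqrt (c ^ 2) := (Real.sqrt_sq hc_nonneg).symm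
    _ ≤ Real.sqrt (2 * jsDiv P Q) := Real.sqrt_le_sqrt (by linarith)


/-- Let `H ≥ 1`, and for `t ∈ {1, …, H}` let `P_t`, `Q_t` be probability
measures on a fixed measurable action space and `ℓ_t` real-valued functionals that are
`L`-Lipschitz in total variation on probability measures. With
`R_P = Σ_t ℓ_t(P_t)`, `R_Q = Σ_t ℓ_t(Q_t)`, and average consistency loss
`C = (1/H) Σ_t JSD(P_t‖Q_t)`, we have `|R_P − R_Q| ≤ H L √(2 C)`. -/
theorem sum_tv_lipschitz_consistency_bound
    {𝒜 : Type*} [MeasurableSpace 𝒜]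
    (H : ℕ) (hH : 1 ≤ H)
    (P Q : Fin H → Measure 𝒜)
    (hP : ∀ t, IsProbabilityMeasure (P t)) (hQ : ∀ t, IsProbabilityMeasure (Q t))
    (L : ℝ) (hL : 0 < L) (ℓ : Fin H → Measure 𝒜 → ℝ)
    (hℓ : ∀ t, ∀ P' Q' : Measure 𝒜, IsProbabilityMeasure P' → IsProbabilityMeasure Q' →
      |ℓ t P' - ℓ t Q'| ≤ L * tvDist P' Q') :
    |(∑ t, ℓ t (P t)) - ∑ t, ℓ t (Q t)| ≤
      (H : ℝ) * L * Real.sqrt (2 * ((1 / (H : ℝ)) * ∑ t, jsDiv (P t) (Q t))) := by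

  have hH0 : (0:ℝ) < (H : ℝ) := by exact_mod_cast hH
  have hkey : ∀ t, 0 ≤ jsDiv (P t) (Q t) ∧
      tvDist (P t) (Q t) ≤ Real.sqrt (2 * jsDiv (P t) (Q t)) := fun t => by
    haveI := hP t; haveI := hQ t
    exact tv_le_sqrt_js (P t) (Q t)
  have hstep : ∀ t, |ℓ t (P t) - ℓ t (Q t)| ≤ L * Real.sqrt (2 * jsDiv (P t) (Q t)) :=
    fun t => (hℓ t _ _ (hP t) (hQ t)).trans
      (mul_le_mul_of_nonneg_left (hkey t).2 hL.le)
  set J : Fin H → ℝ := fun t => jsDiv (P t) (Q t) with hJ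
  set S : ℝ := ∑ t, Real.sqrt (2 * J t) with hS
  have h1 : |(∑ t, ℓ t (P t)) - ∑ t, ℓ t (Q t)| ≤ L * S := by
    rw [← Finset.sum_sub_distrib, hS, Finset.mul_sum]
    exact (Finset.abs_sum_le_sum_abs _ _).trans (Finset.sum_le_sum fun t _ => hstep t)
  have hS_nonneg : 0 ≤ S := Finset.sum_nonneg fun t _ => Real.sqrt_nonneg _
  have hcs : S ^ 2 ≤ (H : ℝ) * (2 * ∑ t, J t) := by
    have := Finset.sum_sq_le_sum_mul_sum_of_sq_eq_mul Finset.univ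
      (r := fun t => Real.sqrt (2 * J t)) (f := fun _ => (1:ℝ)) (g := fun t => 2 * J t)
      (fun _ _ => zero_le_one) (fun t _ => by show (0:ℝ) ≤ 2 * J t; simp only [hJ]; linarith [(hkey t).1])
      (fun t _ => by rw [Real.sq_sqrt (by linarith [(hkey t).1])]; ring)
    simpa only [Finset.sum_const, Finset.card_univ, Fintype.card_fin, nsmul_eq_mul,
      mul_one, ← Finset.mul_sum, hS] using this
  have hS_le : S ≤ Real.sqrt ((H : ℝ) * (2 * ∑ t, J t)) := by
    rw [← Real.sqrt_sq hS_nonneg]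
    exact Real.sqrt_le_sqrt hcs
  have heq : Real.sqrt ((H : ℝ) * (2 * ∑ t, J t))
      = (H : ℝ) * Real.sqrt (2 * ((1 / (H : ℝ)) * ∑ t, J t)) := by
    rw [show (H : ℝ) * (2 * ∑ t, J t) = (H : ℝ)^2 * (2 * ((1 / (H : ℝ)) * ∑ t, J t)) by
      field_simp]
    rw [Real.sqrt_mul (sq_nonneg _), Real.sqrt_sq hH0.le]
  calc |(∑ t, ℓ t (P t)) - ∑ t, ℓ t (Q t)| ≤ L * S := h1
    _ ≤ L * ((H : ℝ) * Real.sqrt (2 * ((1 / (H : ℝ)) * ∑ t, J t))) := by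
        rw [← heq]; exact mul_le_mul_of_nonneg_left hS_le hL.le
    _ = (H : ℝ) * L * Real.sqrt (2 * ((1 / (H : ℝ)) * ∑ t, jsDiv (P t) (Q t))) := by
        rw [hJ]; ring
end

section
/- Let (Ω, ℱ, P) be a probability space, K ≥ 1 an integer, and A_1, …, A_K independent identically distributed random variables taking values in a measurable action space 𝒜. Let G ⊆ 𝒜 be a measurable set with P(A_1 ∈ G) = μ, and let V : Ω × 𝒜 → ℝ induce measurable scores s_k = V(A_k). For each unordered pair {i, j} with i ≠ j, let M_{ij} be the event that exactly one of A_i, A_j lies in G and the score of the one outside G is at least the score of the one in G, and assume P(M_{ij}) ≤ η for a constant η ≥ 0. Let k̂ be a measurable index maximizing s_k over k ∈ {1, …, K}. Then P(A_{k̂} ∈ G) ≥ 1 − (1 − μ)^K − (K(K−1)/2)·η. -/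
open MeasureTheory ProbabilityTheory

/-- Let `A_1, …, A_K` be i.i.d. random variables with values in a
measurable action space `𝒜`, `G ⊆ 𝒜` a measurable set with per-sample coverage
`P(A_1 ∈ G) = μG`, and `s_k = V(A_k)` measurable verifier scores. Assume every pairwise
misranking event (exactly one of the pair lies in `G`, and the sample outside `G` scores
at least as high as the one in `G`) has probability at most `η`. If `k̂` is a measurable
index maximizing the score, then
`P(A_{k̂} ∈ G) ≥ 1 − (1 − μG)^K − (K(K−1)/2) η`. -/
theorem best_of_K_verifier_selection
    {Ω 𝒜 : Type*} [MeasurableSpace Ω] [MeasurableSpace 𝒜]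
    (μ : Measure Ω) [IsProbabilityMeasure μ]
    (K : ℕ) (hK : 1 ≤ K)
    (A : Fin K → Ω → 𝒜) (hA : ∀ k, Measurable (A k))
    (hindep : iIndepFun A μ)
    (hident : ∀ i j : Fin K, IdentDistrib (A i) (A j) μ μ)
    (G : Set 𝒜) (hG : MeasurableSet G)
    (μG : ℝ) (hcov : ∀ k : Fin K, (μ {ω | A k ω ∈ G}).toReal = μG)
    (V : Ω × 𝒜 → ℝ) (s : Fin K → Ω → ℝ)
    (hs : ∀ k ω, s k ω = V (ω, A k ω)) (hsmeas : ∀ k, Measurable (s k))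
    (η : ℝ) (hη : 0 ≤ η)
    (hmis : ∀ i j : Fin K, i ≠ j →
      (μ {ω | (A i ω ∈ G ∧ A j ω ∉ G ∧ s i ω ≤ s j ω) ∨
              (A j ω ∈ G ∧ A i ω ∉ G ∧ s j ω ≤ s i ω)}).toReal ≤ η)
    (khat : Ω → Fin K) (hkhat : Measurable khat)
    (hmax : ∀ ω k, s k ω ≤ s (khat ω) ω) :
    1 - (1 - μG) ^ K - ((K : ℝ) * ((K : ℝ) - 1) / 2) * η ≤
      (μ {ω | A (khat ω) ω ∈ G}).toReal := by
  classical
  set Good : Set Ω := {ω | A (khat ω) ω ∈ G} with hGoodDef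
  have hGoodEq : Good = ⋃ k : Fin K, (khat ⁻¹' {k} ∩ A k ⁻¹' G) := by
    ext ω
    simp only [hGoodDef, Set.mem_setOf_eq, Set.mem_iUnion, Set.mem_inter_iff,
      Set.mem_preimage, Set.mem_singleton_iff]
    constructor
    · intro h; exact ⟨khat ω, rfl, h⟩
    · rintro ⟨k, hk, hkG⟩; rw [hk]; exact hkG
  have hGoodMeas : MeasurableSet Good := by
    rw [hGoodEq]
    exact MeasurableSet.iUnion fun k =>
      (hkhat (measurableSet_singleton k)).inter ((hA k) hG)
  -- misranking sets
  set M : Fin K → Fin K → Set Ω := fun i j =>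
    {ω | (A i ω ∈ G ∧ A j ω ∉ G ∧ s i ω ≤ s j ω) ∨
         (A j ω ∈ G ∧ A i ω ∉ G ∧ s j ω ≤ s i ω)} with hMdef
  set P : Finset (Fin K × Fin K) :=
    Finset.univ.filter (fun p : Fin K × Fin K => p.1 < p.2) with hPdef
  -- key inclusion
  have hincl : Goodᶜ ⊆ (⋂ k, A k ⁻¹' Gᶜ) ∪ ⋃ p ∈ P, M p.1 p.2 := by
    intro ω hω
    by_cases hall : ∀ k, A k ω ∉ G
    · exact Or.inl (Set.mem_iInter.2 fun k => hall k)
    · push_neg at hall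
      obtain ⟨i, hi⟩ := hall
      have hj : A (khat ω) ω ∉ G := hω
      have hij : i ≠ khat ω := by intro h; rw [h] at hi; exact hj hi
      refine Or.inr ?_
      rcases lt_or_gt_of_ne hij with h | h
      · refine Set.mem_biUnion (show (i, khat ω) ∈ P by simp [hPdef, h]) ?_
        exact Or.inl ⟨hi, hj, hmax ω i⟩
      · refine Set.mem_biUnion (show (khat ω, i) ∈ P by simp [hPdef, h]) ?_
        exact Or.inr ⟨hi, hj, hmax ω i⟩
  -- measure bound in ℝ≥0∞
  have key : μ Goodᶜ ≤ μ (⋂ k, A k ⁻¹' Gᶜ) + ∑ p ∈ P, μ (M p.1 p.2) := by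
    refine (measure_mono hincl).trans ((measure_union_le _ _).trans ?_)
    gcongr
    exact measure_biUnion_finset_le P _
  -- independence: measure of the all-out event
  have hAll : (μ (⋂ k, A k ⁻¹' Gᶜ)).toReal = (1 - μG) ^ K := by
    rw [hindep.meas_iInter (fun k => ⟨Gᶜ, hG.compl, rfl⟩), ENNReal.toReal_prod]
    have hfac : ∀ k : Fin K, (μ (A k ⁻¹' Gᶜ)).toReal = 1 - μG := by
      intro k
      have h1 : A k ⁻¹' Gᶜ = {ω | A k ω ∈ G}ᶜ := rfl
      have h2 : MeasurableSet {ω | A k ω ∈ G} := (hA k) hG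
      rw [h1, measure_compl h2 (measure_ne_top μ _), measure_univ,
        ENNReal.toReal_sub_of_le prob_le_one ENNReal.one_ne_top]
      simp [hcov k]
    rw [Finset.prod_congr rfl (fun k _ => hfac k), Finset.prod_const, Finset.card_univ,
      Fintype.card_fin]
  -- sum of misranking probabilities
  have hsum : ∑ p ∈ P, (μ (M p.1 p.2)).toReal ≤ (P.card : ℝ) * η := by
    rw [← nsmul_eq_mul]
    refine Finset.sum_le_card_nsmul P _ η ?_
    intro p hp
    have hlt : p.1 < p.2 := (Finset.mem_filter.1 hp).2
    exact hmis p.1 p.2 (ne_of_lt hlt)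
  -- cardinality of the set of ordered pairs
  have hcard2 : P.card * 2 = K * (K - 1) := by
    have h1 : P.card = ∑ j : Fin K, (j : ℕ) := by
      rw [hPdef, Finset.card_filter, Fintype.sum_prod_type_right]
      congr 1
      ext j
      rw [Finset.sum_boole]
      have : (Finset.univ.filter fun i : Fin K => i < j) = Finset.Iio j := by
        ext i; simp
      rw [this, Fin.card_Iio]
      simp
    rw [h1, Fin.sum_univ_eq_sum_range (fun i => i) K, Finset.sum_range_id_mul_two]
  have hcardR : (P.card : ℝ) = (K : ℝ) * ((K : ℝ) - 1) / 2 := by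
    have := congrArg (fun n : ℕ => (n : ℝ)) hcard2
    push_cast [Nat.cast_sub hK] at this
    linarith
  -- put everything together
  have hGc : (μ Goodᶜ).toReal = 1 - (μ Good).toReal := by
    rw [measure_compl hGoodMeas (measure_ne_top μ _), measure_univ,
      ENNReal.toReal_sub_of_le prob_le_one ENNReal.one_ne_top, ENNReal.toReal_one]
  have hfin : μ (⋂ k, A k ⁻¹' Gᶜ) + ∑ p ∈ P, μ (M p.1 p.2) ≠ ⊤ := by
    refine ENNReal.add_ne_top.2 ⟨measure_ne_top μ _, ?_⟩
    exact (ENNReal.sum_lt_top.2 fun p _ => measure_lt_top μ _).ne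
  have key' : (μ Goodᶜ).toReal ≤
      (μ (⋂ k, A k ⁻¹' Gᶜ)).toReal + ∑ p ∈ P, (μ (M p.1 p.2)).toReal := by
    have := ENNReal.toReal_mono hfin key
    rwa [ENNReal.toReal_add (measure_ne_top μ _)
      (ENNReal.sum_lt_top.2 fun p _ => measure_lt_top μ _).ne, ENNReal.toReal_sum
      (fun p _ => measure_ne_top μ _)] at this
  rw [hGc] at key'
  rw [hAll] at key'
  have := hsum.trans (by rw [hcardR])
  linarith
end
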